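/- Let n, m, t be positive integers with m ≥ 2 and t ≥ 2, and let G be a red-blue edge-colored complete graph on (n − 1)(m − 1) + t − 1 vertices containing no blue copy of tK_m, whose vertex set is partitioned into sets A₁, …, A_{n−1} such that |A_i| = m − 1 for each i ∈ {1, …, n−t}, |A_i| = m for each i ∈ {n−t+1, …, n−1}, and every edge inside each A_i is blue. Then: (1) for all distinct i, j ∈ {1, …, n−t} there are m − 1 pairwise vertex-disjoint red edges between A_i and A_j; and (2) if instead the partition satisfies, for some set D ⊆ {1, …, n−1} of size t − 1, that |A_k| = m for each k ∈ D and |A_k| = m − 1 for each k ∉ D (with all A_k blue cliques and no blue tK_m), then for all distinct i', j' ∉ D there are m − 1 pairwise vertex-disjoint red edges between A_{i'} and A_{j'}. -/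
import Mathlib


/-- `ContainsCopy G H`: the graph `G` contains a copy of the graph `H` (as a subgraph),
i.e. there is an injective map of the vertices of `H` into `G` carrying edges to edges. -/
def ContainsCopy {α β : Type*} (G : SimpleGraph α) (H : SimpleGraph β) : Prop :=
  ∃ f : β ↪ α, ∀ ⦃u v : β⦄, H.Adj u v → G.Adj (f u) (f v)

/-- `Arrows N H₁ H₂` : `K_N → (H₁, H₂)`, i.e. every red-blue coloring of the edges of the
complete graph on `N` vertices (described by its graph `R` of red edges; the blue edges are
those of `Rᶜ`) contains a red copy of `H₁` or a blue copy of `H₂`. -/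
def Arrows (N : ℕ) {α β : Type*} (H₁ : SimpleGraph α) (H₂ : SimpleGraph β) : Prop :=
  ∀ R : SimpleGraph (Fin N), ContainsCopy R H₁ ∨ ContainsCopy Rᶜ H₂

/-- The Ramsey number `r(H₁, H₂)`: the least `N` with `K_N → (H₁, H₂)`. -/
noncomputable def ramseyNumber {α β : Type*} (H₁ : SimpleGraph α) (H₂ : SimpleGraph β) : ℕ :=
  sInf {N | Arrows N H₁ H₂}

/-- `tK t m` : the disjoint union of `t` copies of the complete graph `K_m`. -/
def tK (t m : ℕ) : SimpleGraph (Fin t × Fin m) :=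
  SimpleGraph.fromRel (fun a b => a.1 = b.1)

/-- `starG k` : the star `K_{1,k}`, with center `none` and `k` leaves. -/
def starG (k : ℕ) : SimpleGraph (Option (Fin k)) :=
  SimpleGraph.fromRel (fun a _ => a = none)

/-- A red-blue coloring of a complete graph (described by its graph `R` of red edges; the blue
edges are those of `Rᶜ`) belongs to the family `𝒢_{n,m,t}` if the vertex set can be partitioned
into classes `A₁, …, A_{m-1}` of size `n-1` (labelled `some i`) and a class `B` of size `t-1`
(labelled `none`) such that every edge inside some `Aᵢ` is red and every edge joining two
different classes is blue (edges inside `B` are arbitrary). -/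
def GFamily (n m t : ℕ) {V : Type*} [Fintype V] (R : SimpleGraph V) : Prop :=
  ∃ f : V → Option (Fin (m - 1)),
    (∀ i : Fin (m - 1), (Finset.univ.filter fun v => f v = some i).card = n - 1) ∧
    ((Finset.univ.filter fun v => f v = none).card = t - 1) ∧
    (∀ u v : V, u ≠ v → ∀ i : Fin (m - 1), f u = some i → f v = some i → R.Adj u v) ∧
    (∀ u v : V, f u ≠ f v → ¬ R.Adj u v)

/-- `RedMatchingBetween R X Y k` : there are `k` pairwise vertex-disjoint red edges
(edges of `R`) joining `X` to `Y`. -/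
def RedMatchingBetween {V : Type*} (R : SimpleGraph V) (X Y : Finset V) (k : ℕ) : Prop :=
  ∃ e : Fin k → V × V,
    (∀ p, (e p).1 ∈ X ∧ (e p).2 ∈ Y ∧ R.Adj (e p).1 (e p).2) ∧
    (∀ p q, p ≠ q → (e p).1 ≠ (e q).1 ∧ (e p).1 ≠ (e q).2 ∧
      (e p).2 ≠ (e q).1 ∧ (e p).2 ≠ (e q).2)

/-- `IsBlueMatching R k e` : in the red-blue colored complete graph with red graph `R`,
the `k` pairs given by `e` form a blue matching (pairwise vertex-disjoint blue edges). -/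
def IsBlueMatching {V : Type*} (R : SimpleGraph V) (k : ℕ) (e : Fin k → V × V) : Prop :=
  (∀ p, (e p).1 ≠ (e p).2 ∧ ¬ R.Adj (e p).1 (e p).2) ∧
  (∀ p q, p ≠ q → (e p).1 ≠ (e q).1 ∧ (e p).1 ≠ (e q).2 ∧
    (e p).2 ≠ (e q).1 ∧ (e p).2 ≠ (e q).2)

/-- `KplusStar M k` : the complete graph on the `M` vertices `some j`, together with one
extra vertex `none` joined to exactly `k` of them (namely `some j` for `j < k`). -/
def KplusStar (M k : ℕ) : SimpleGraph (Option (Fin M)) :=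
  SimpleGraph.fromRel (fun a b =>
    (a ≠ none ∧ b ≠ none) ∨ (a = none ∧ ∃ j : Fin M, b = some j ∧ (j : ℕ) < k))

/-- `ArrowsOn H H₁ H₂` : `H → (H₁, H₂)`, i.e. every red-blue coloring of the edges of the
host graph `H` (red graph `R ≤ H`, blue graph `H \ R`) contains a red copy of `H₁` or a
blue copy of `H₂`. -/
def ArrowsOn {V α β : Type*} (H : SimpleGraph V) (H₁ : SimpleGraph α) (H₂ : SimpleGraph β) :
    Prop :=
  ∀ R : SimpleGraph V, R ≤ H → ContainsCopy R H₁ ∨ ContainsCopy (H \ R) H₂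

/-- The star-critical Ramsey number `r₊(H₁, H₂)`: the least `k` such that the graph obtained
from `K_{N-1}` by adding one new vertex joined to exactly `k` of its vertices arrows
`(H₁, H₂)`, where `N = r(H₁, H₂)`. -/
noncomputable def starCritRamsey {α β : Type*} (H₁ : SimpleGraph α) (H₂ : SimpleGraph β) : ℕ :=
  sInf {k | ArrowsOn (KplusStar (ramseyNumber H₁ H₂ - 1) k) H₁ H₂}

/-- The chromatic number of `H`, as a natural number. -/
noncomputable def chromNum {β : Type*} (H : SimpleGraph β) : ℕ :=
  H.chromaticNumber.toNat

/-- The chromatic surplus `s(H)`: the minimum cardinality of a color class over all proper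
colorings of `H` with `χ(H)` colors. -/
noncomputable def chromSurplus {β : Type*} [Fintype β] (H : SimpleGraph β) : ℕ :=
  sInf {s | ∃ C : H.Coloring (Fin (chromNum H)),
    s = sInf {k | ∃ i : Fin (chromNum H),
      k = (Finset.univ.filter fun v => C v = i).card}}

/-- If there are `t` pairwise disjoint blue `m`-cliques, the blue graph contains `tK_m`. -/
lemma tK_copy_aux {V : Type*} (R : SimpleGraph V) (t m : ℕ) (B : Fin t → Finset V)
    (hd : ∀ a b, a ≠ b → Disjoint (B a) (B b)) (hc : ∀ a, (B a).card = m)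
    (hb : ∀ a, ∀ u ∈ B a, ∀ v ∈ B a, u ≠ v → ¬ R.Adj u v) :
    ContainsCopy Rᶜ (tK t m) := by
  classical
  have g : ∀ a, Fin m ≃ {x // x ∈ B a} := fun a => ((B a).equivFinOfCardEq (hc a)).symm
  have hmem : ∀ a (j : Fin m), ((g a j : {x // x ∈ B a}) : V) ∈ B a := fun a j => (g a j).2
  refine ⟨⟨fun p => ((g p.1 p.2 : {x // x ∈ B p.1}) : V), ?_⟩, ?_⟩
  · rintro ⟨a, j⟩ ⟨b, k⟩ h
    dsimp at h
    by_cases hab : a = b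
    · subst hab
      have := (g a).injective (Subtype.ext h)
      simp [this]
    · exact ((Finset.disjoint_left.mp (hd a b hab) (hmem a j))
        (by rw [h]; exact hmem b k)).elim
  · rintro ⟨a, j⟩ ⟨b, k⟩ hadj
    simp only [tK, SimpleGraph.fromRel_adj, ne_eq] at hadj
    obtain ⟨hne, hor⟩ := hadj
    have hab : a = b := hor.elim id Eq.symm
    subst hab
    have hjk : j ≠ k := by intro h; exact hne (by simp [h])
    have hvne : ((g a j : {x // x ∈ B a}) : V) ≠ ((g a k : {x // x ∈ B a}) : V) := by
      intro h; exact hjk ((g a).injective (Subtype.ext h))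
    exact (SimpleGraph.compl_adj R _ _).mpr ⟨hvne, hb a _ (hmem a j) _ (hmem a k) hvne⟩

/-- Key lemma: in a `tK_{t'+1,m}`-blue-free coloring with disjoint blue cliques, given `t'`
classes of size `m` and two further classes of size `m-1`, there is a red matching of size
`m-1` between the latter two. -/
lemma key_matching {V : Type*} [Fintype V] [DecidableEq V] (R : SimpleGraph V) (m t' : ℕ)
    (hm : 1 ≤ m)
    (hblue : ¬ ContainsCopy Rᶜ (tK (t' + 1) m))
    {ι : Type*} [DecidableEq ι] (A : ι → Finset V)
    (hdisj : ∀ a b : ι, a ≠ b → Disjoint (A a) (A b))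
    (hcliques : ∀ i, ∀ u ∈ A i, ∀ v ∈ A i, ¬ R.Adj u v)
    (P : Finset ι) (hP : P.card = t')
    (hPbig : ∀ k ∈ P, (A k).card = m)
    (i j : ι) (hi : i ∉ P) (hj : j ∉ P) (hij : i ≠ j)
    (hAi : (A i).card = m - 1) (hAj : (A j).card = m - 1) :
    RedMatchingBetween R (A i) (A j) (m - 1) := by
  classical
  by_cases hall : ∀ s : Finset {x // x ∈ A i},
      s.card ≤ (s.biUnion fun a => (A j).filter fun b => R.Adj (a : V) b).card
  · obtain ⟨f, hfinj, hf⟩ :=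
      (Finset.all_card_le_biUnion_card_iff_exists_injective
        (fun a : {x // x ∈ A i} => (A j).filter fun b => R.Adj (a : V) b)).mp hall
    set g := ((A i).equivFinOfCardEq hAi).symm with hg
    have hd := hdisj i j hij
    refine ⟨fun p => ((g p : V), f (g p)), ?_, ?_⟩
    · intro p
      have h2 := hf (g p)
      simp only [Finset.mem_filter] at h2
      exact ⟨(g p).2, h2.1, h2.2⟩
    · intro p q hpq
      have hgp := (g p).2
      have hgq := (g q).2
      have hfp := hf (g p); have hfq := hf (g q)
      simp only [Finset.mem_filter] at hfp hfq
      refine ⟨?_, ?_, ?_, ?_⟩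
      · intro h; exact hpq (g.injective (Subtype.ext h))
      · intro h; dsimp only at h
        exact Finset.disjoint_left.mp hd hgp (by rw [h]; exact hfq.1)
      · intro h; dsimp only at h
        exact Finset.disjoint_left.mp hd hgq (by rw [← h]; exact hfp.1)
      · intro h; exact hpq (g.injective (hfinj h))
  · exfalso
    push_neg at hall
    obtain ⟨s, hs⟩ := hall
    set S := s.image Subtype.val with hSdef
    set N := s.biUnion (fun a => (A j).filter fun b => R.Adj (a : V) b) with hNdef
    have hScard : S.card = s.card := Finset.card_image_of_injective _ Subtype.val_injective
    have hSsub : S ⊆ A i := by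
      intro x hx; obtain ⟨a, _, rfl⟩ := Finset.mem_image.mp hx; exact a.2
    have hNsub : N ⊆ A j := by
      intro x hx
      obtain ⟨a, _, hx'⟩ := Finset.mem_biUnion.mp hx
      exact (Finset.mem_filter.mp hx').1
    have hSle : S.card ≤ m - 1 := le_of_le_of_eq (Finset.card_le_card hSsub) hAi
    have hsd : ((A j) \ N).card = (A j).card - N.card := Finset.card_sdiff_of_subset hNsub
    have hT : m - S.card ≤ ((A j) \ N).card := by omega
    obtain ⟨T, hTsub, hTcard⟩ := Finset.exists_subset_card_eq hT
    have hTj : T ⊆ A j := hTsub.trans (Finset.sdiff_subset)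
    have hSTdisj : Disjoint S T :=
      Finset.disjoint_of_subset_left hSsub (Finset.disjoint_of_subset_right hTj (hdisj i j hij))
    set C := S ∪ T with hCdef
    have hCcard : C.card = m := by
      rw [hCdef, Finset.card_union_of_disjoint hSTdisj, hTcard]
      omega
    have hCblue : ∀ u ∈ C, ∀ v ∈ C, u ≠ v → ¬ R.Adj u v := by
      intro u hu v hv huv hadj
      have hST : ∀ x ∈ S, ∀ y ∈ T, ¬ R.Adj x y := by
        intro x hx y hy hxy
        obtain ⟨a, ha, rfl⟩ := Finset.mem_image.mp hx
        have hyN : y ∈ N := Finset.mem_biUnion.mpr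
          ⟨a, ha, Finset.mem_filter.mpr ⟨hTj hy, hxy⟩⟩
        exact ((Finset.mem_sdiff.mp (hTsub hy)).2) hyN
      rcases Finset.mem_union.mp hu with hu | hu <;> rcases Finset.mem_union.mp hv with hv | hv
      · exact hcliques i u (hSsub hu) v (hSsub hv) hadj
      · exact hST u hu v hv hadj
      · exact hST v hv u hu hadj.symm
      · exact hcliques j u (hTj hu) v (hTj hv) hadj
    -- build the t'+1 disjoint blue m-cliques
    have hij' : ∀ k ∈ P, k ≠ i ∧ k ≠ j := by
      intro k hk
      exact ⟨fun h => hi (h ▸ hk), fun h => hj (h ▸ hk)⟩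
    set gP := (P.equivFinOfCardEq hP).symm with hgP
    have hCsub : C ⊆ A i ∪ A j :=
      Finset.union_subset (hSsub.trans Finset.subset_union_left)
        (hTj.trans Finset.subset_union_right)
    set B : Fin (t' + 1) → Finset V := Fin.cons C (fun k => A (gP k)) with hBdef
    have hd : ∀ a b, a ≠ b → Disjoint (B a) (B b) := by
      have hCA : ∀ k : Fin t', Disjoint C (A (gP k)) := by
        intro k
        obtain ⟨h1, h2⟩ := hij' _ (gP k).2
        refine Finset.disjoint_of_subset_left hCsub ?_
        rw [Finset.disjoint_union_left]
        exact ⟨hdisj i _ (Ne.symm h1), hdisj j _ (Ne.symm h2)⟩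
      intro a b hab
      induction a using Fin.cases <;> induction b using Fin.cases
      · exact (hab rfl).elim
      · simpa [hBdef] using hCA _
      · simpa [hBdef] using (hCA _).symm
      · simp only [hBdef, Fin.cons_succ]
        rename_i a b
        refine hdisj _ _ fun h => hab ?_
        rw [gP.injective (Subtype.ext h)]
    have hc : ∀ a, (B a).card = m := by
      intro a
      induction a using Fin.cases
      · simpa [hBdef] using hCcard
      · simpa [hBdef] using hPbig _ (gP _).2
    have hb : ∀ a, ∀ u ∈ B a, ∀ v ∈ B a, u ≠ v → ¬ R.Adj u v := by
      intro a
      induction a using Fin.cases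
      · simpa [hBdef] using hCblue
      · simp only [hBdef, Fin.cons_succ]
        intro u hu v hv huv
        exact hcliques _ u hu v hv
    exact hblue (tK_copy_aux R (t' + 1) m B hd hc hb)

/-- Claim 2.4. Under the stated partition of a tKm-blue-free coloring into blue cliques
`A₁,…,A_{n−1}`: (1) between any two of the first `n − t` classes there are `m − 1` pairwise
vertex-disjoint red edges; (2) the analogous statement for a partition where the classes of
size `m` are indexed by an arbitrary set `D` of size `t − 1`. -/
theorem disjoint_red_matchings (n m t : ℕ) (hn : 1 ≤ n) (hm : 2 ≤ m) (ht : 2 ≤ t)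
    (R : SimpleGraph (Fin ((n - 1) * (m - 1) + t - 1)))
    (hblue : ¬ ContainsCopy Rᶜ (tK t m))
    (A : Fin (n - 1) → Finset (Fin ((n - 1) * (m - 1) + t - 1)))
    (hpart : ∀ v, ∃! i, v ∈ A i)
    (hcliques : ∀ i, ∀ u ∈ A i, ∀ v ∈ A i, ¬ R.Adj u v)
    (hsmall : ∀ i : Fin (n - 1), (i : ℕ) < n - t → (A i).card = m - 1)
    (hbig : ∀ i : Fin (n - 1), n - t ≤ (i : ℕ) → (A i).card = m) :
    (∀ i j : Fin (n - 1), (i : ℕ) < n - t → (j : ℕ) < n - t → i ≠ j →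
      RedMatchingBetween R (A i) (A j) (m - 1)) ∧
    (∀ (A' : Fin (n - 1) → Finset (Fin ((n - 1) * (m - 1) + t - 1)))
       (D : Finset (Fin (n - 1))),
      (∀ v, ∃! i, v ∈ A' i) →
      (∀ i, ∀ u ∈ A' i, ∀ v ∈ A' i, ¬ R.Adj u v) →
      D.card = t - 1 →
      (∀ k ∈ D, (A' k).card = m) →
      (∀ k ∉ D, (A' k).card = m - 1) →
      ∀ i' j' : Fin (n - 1), i' ∉ D → j' ∉ D → i' ≠ j' →
        RedMatchingBetween R (A' i') (A' j') (m - 1)) := by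
  classical
  obtain ⟨t', rfl⟩ : ∃ t', t = t' + 1 := ⟨t - 1, by omega⟩
  have hm1 : 1 ≤ m := by omega
  constructor
  · intro i j hi hj hij
    have hdisj : ∀ a b : Fin (n - 1), a ≠ b → Disjoint (A a) (A b) := by
      intro a b hab
      exact Finset.disjoint_left.mpr fun v hva hvb => hab ((hpart v).unique hva hvb)
    -- i < n - (t'+1) forces n > t'+1
    have hnt : t' + 1 < n := by
      by_contra h
      have : n - (t' + 1) = 0 := by omega
      omega
    set P : Finset (Fin (n - 1)) :=
      Finset.univ.filter (fun k : Fin (n - 1) => n - (t' + 1) ≤ (k : ℕ)) with hPdef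
    have hPcard : P.card = t' := by
      have himg : P.image Fin.val = Finset.Ico (n - (t' + 1)) (n - 1) := by
        ext x
        simp only [hPdef, Finset.mem_image, Finset.mem_filter, Finset.mem_univ, true_and,
          Finset.mem_Ico]
        constructor
        · rintro ⟨k, hk, rfl⟩; exact ⟨hk, k.2⟩
        · rintro ⟨h1, h2⟩; exact ⟨⟨x, h2⟩, h1, rfl⟩
      have := Finset.card_image_of_injective P Fin.val_injective
      rw [himg] at this
      rw [Nat.card_Ico] at this
      omega
    refine key_matching R m t' hm1 hblue A hdisj hcliques P hPcard ?_ i j ?_ ?_ hij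
      (hsmall i hi) (hsmall j hj)
    · intro k hk
      exact hbig k (by simpa [hPdef] using hk)
    · simp [hPdef]; omega
    · simp [hPdef]; omega
  · intro A' D hpart' hcliques' hD hDbig hDsmall i' j' hi' hj' hij'
    have hdisj : ∀ a b : Fin (n - 1), a ≠ b → Disjoint (A' a) (A' b) := by
      intro a b hab
      exact Finset.disjoint_left.mpr fun v hva hvb => hab ((hpart' v).unique hva hvb)
    exact key_matching R m t' hm1 hblue A' hdisj hcliques' D (by omega) hDbig i' j' hi' hj'
      hij' (hDsmall i' hi') (hDsmall j' hj')
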